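/- For μ-almost every ω ∈ Ω there exists a threshold point z*(ω) ∈ [0,1] such that φ_{ω_n}(z) → 0 as n → ∞ for every z ∈ [0, z*(ω)), and φ_{ω_n}(z) → 1 as n → ∞ for every z ∈ (z*(ω), 1]. Moreover, defining Z*(ω) := inf{ z ∈ [0,1] : φ_{ω_n}(z) → 1 as n → ∞ } (with inf of the empty set taken to be 1), Z* is uniformly distributed on [0,1]: μ{ω : Z*(ω) ≤ z} = z for every z ∈ [0,1]. -/

import Mathlib

open MeasureTheory Filter Topology

/-- The BEC polar maps: `t₁(x) = x²`, `t₀(x) = 2x - x²`. -/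
noncomputable def becT (b : Bool) (x : ℝ) : ℝ := if b then x ^ 2 else 2 * x - x ^ 2

/-- The BEC Bhattacharyya process started at `z`; `becZ z n ω = φ_{ω_n}(z)`. -/
noncomputable def becZ (z : ℝ) : ℕ → (ℕ → Bool) → ℝ
  | 0, _ => z
  | n + 1, ω => becT (ω n) (becZ z n ω)

/-- `μ` is the i.i.d. Bernoulli(1/2) product measure on `{0,1}^ℕ`,
characterized by its values on cylinder sets. -/
def IsBernoulliHalf (μ : Measure (ℕ → Bool)) : Prop :=
  ∀ (n : ℕ) (b : Fin n → Bool), μ {ω | ∀ i : Fin n, ω i = b i} = (2 : ENNReal)⁻¹ ^ n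

/-- The threshold point `Z*(ω) = inf { z ∈ [0,1] : φ_{ω_n}(z) → 1 }`,
with the infimum of the empty set taken to be `1`. -/
noncomputable def Zstar (ω : ℕ → Bool) : ℝ :=
  sInf ({z ∈ Set.Icc (0:ℝ) 1 | Tendsto (fun n => becZ z n ω) atTop (nhds 1)} ∪ {1})

lemma becT_mem {x : ℝ} (b : Bool) (hx : x ∈ Set.Icc (0:ℝ) 1) : becT b x ∈ Set.Icc (0:ℝ) 1 := by
  obtain ⟨h0, h1⟩ := hx
  cases b <;> simp only [becT, if_true, if_false, Bool.false_eq_true, Set.mem_Icc] <;>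
    constructor <;> nlinarith

lemma becT_mono {x y : ℝ} (b : Bool) (h0 : 0 ≤ x) (hxy : x ≤ y) (h1 : y ≤ 1) :
    becT b x ≤ becT b y := by
  cases b <;> simp only [becT, if_true, if_false, Bool.false_eq_true] <;> nlinarith

lemma becZ_mem {z : ℝ} (hz : z ∈ Set.Icc (0:ℝ) 1) (n : ℕ) (ω : ℕ → Bool) :
    becZ z n ω ∈ Set.Icc (0:ℝ) 1 := by
  induction n with
  | zero => exact hz
  | succ n ih => exact becT_mem _ ih

lemma becZ_mono {x y : ℝ} (h0 : 0 ≤ x) (hxy : x ≤ y) (h1 : y ≤ 1) (n : ℕ) (ω : ℕ → Bool) :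
    becZ x n ω ≤ becZ y n ω := by
  induction n with
  | zero => exact hxy
  | succ n ih =>
    have hx := becZ_mem ⟨h0, hxy.trans h1⟩ n ω
    have hy := becZ_mem ⟨h0.trans hxy, h1⟩ n ω
    exact becT_mono _ hx.1 ih hy.2

lemma becZ_shift (z : ℝ) (n : ℕ) (ω : ℕ → Bool) :
    becZ z (n+1) ω = becZ (becT (ω 0) z) n (fun i => ω (i+1)) := by
  induction n with
  | zero => rfl
  | succ n ih =>
    show becT (ω (n+1)) (becZ z (n+1) ω) = becT (ω (n+1)) (becZ (becT (ω 0) z) n fun i => ω (i+1))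
    rw [ih]

noncomputable def becZF : (n : ℕ) → (Fin n → Bool) → ℝ → ℝ
  | 0, _, z => z
  | n+1, b, z => becZF n (Fin.tail b) (becT (b 0) z)

lemma becZF_cons (n : ℕ) (c : Bool) (b : Fin n → Bool) (z : ℝ) :
    becZF (n+1) (Fin.cons c b) z = becZF n b (becT c z) := by
  simp [becZF, Fin.tail_cons]

lemma becZ_eq_becZF (z : ℝ) (n : ℕ) (ω : ℕ → Bool) :
    becZ z n ω = becZF n (fun i : Fin n => ω i) z := by
  induction n generalizing z ω with
  | zero => rfl
  | succ n ih =>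
    have ht : Fin.tail (fun i : Fin (n+1) => ω i) = fun i : Fin n => ω (i+1) := by
      funext i; simp [Fin.tail]
    rw [becZ_shift, ih]
    show _ = becZF n (Fin.tail fun i : Fin (n + 1) => ω ↑i) (becT (ω 0) z)
    rw [ht]

lemma becZF_mem (n : ℕ) {z : ℝ} (hz : z ∈ Set.Icc (0:ℝ) 1) (b : Fin n → Bool) :
    becZF n b z ∈ Set.Icc (0:ℝ) 1 := by
  induction n generalizing z with
  | zero => exact hz
  | succ n ih => exact ih (becT_mem _ hz) _

lemma sum_split {M : Type*} [AddCommMonoid M] (n : ℕ) (H : (Fin (n+1) → Bool) → M) :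
    ∑ b : Fin (n+1) → Bool, H b = ∑ c : Bool, ∑ b : Fin n → Bool, H (Fin.cons c b) := by
  calc ∑ b : Fin (n+1) → Bool, H b
      = ∑ p : Bool × (Fin n → Bool), H (Fin.cons p.1 p.2) :=
        (Fintype.sum_equiv (Fin.consEquiv (fun _ => Bool)) _ H (fun p => rfl)).symm
    _ = ∑ c : Bool, ∑ b : Fin n → Bool, H (Fin.cons c b) := Fintype.sum_prod_type _

lemma sum_becZF (n : ℕ) (z : ℝ) : ∑ b : Fin n → Bool, becZF n b z = 2^n * z := by
  induction n generalizing z with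
  | zero => rw [Fintype.sum_unique]; simp [becZF]
  | succ n ih =>
    rw [sum_split]
    simp only [becZF_cons]
    rw [Fintype.sum_bool, ih, ih]
    simp only [becT, if_true, if_false, Bool.false_eq_true]
    ring

open MeasureTheory Filter Topology Real in
lemma core_ineq {x : ℝ} (hx : x ∈ Set.Icc (0:ℝ) 1) :
    Real.sqrt (becT false x * (1 - becT false x)) + Real.sqrt (becT true x * (1 - becT true x))
      ≤ Real.sqrt 3 * Real.sqrt (x * (1 - x)) := by
  obtain ⟨h0, h1⟩ := hx
  have hu0 : (0:ℝ) ≤ x * (1 - x) := by nlinarith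
  have ha0 : (0:ℝ) ≤ (2 - x) * (1 - x) := by nlinarith
  have hb0 : (0:ℝ) ≤ x * (1 + x) := by nlinarith
  have e1 : becT false x * (1 - becT false x) = (x * (1 - x)) * ((2 - x) * (1 - x)) := by
    simp only [becT, Bool.false_eq_true, if_false]; ring
  have e2 : becT true x * (1 - becT true x) = (x * (1 - x)) * (x * (1 + x)) := by
    simp only [becT, if_true]; ring
  rw [e1, e2, Real.sqrt_mul hu0, Real.sqrt_mul hu0]
  have key : Real.sqrt ((2 - x) * (1 - x)) + Real.sqrt (x * (1 + x)) ≤ Real.sqrt 3 := by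
    have h3 : Real.sqrt ((2 - x) * (1 - x)) * Real.sqrt (x * (1 + x))
        = Real.sqrt (((2 - x) * (1 - x)) * (x * (1 + x))) := (Real.sqrt_mul ha0 _).symm
    have hs : Real.sqrt (((2 - x) * (1 - x)) * (x * (1 + x))) ≤ (1 + 2 * (x - x ^ 2)) / 2 := by
      rw [show (1 + 2 * (x - x ^ 2)) / 2
          = Real.sqrt (((1 + 2 * (x - x ^ 2)) / 2) ^ 2) from (Real.sqrt_sq (by nlinarith)).symm]
      apply Real.sqrt_le_sqrt
      nlinarith [sq_nonneg (1 - 2 * x), sq_nonneg (x * (1 - x))]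
    rw [Real.le_sqrt (by positivity) (by norm_num)]
    have hA := Real.sq_sqrt ha0
    have hB := Real.sq_sqrt hb0
    nlinarith [Real.sqrt_nonneg ((2 - x) * (1 - x)), Real.sqrt_nonneg (x * (1 + x)), hs, h3]
  calc Real.sqrt (x * (1 - x)) * Real.sqrt ((2 - x) * (1 - x))
        + Real.sqrt (x * (1 - x)) * Real.sqrt (x * (1 + x))
      = Real.sqrt (x * (1 - x)) * (Real.sqrt ((2 - x) * (1 - x)) + Real.sqrt (x * (1 + x))) := by
        ring
    _ ≤ Real.sqrt (x * (1 - x)) * Real.sqrt 3 :=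
        mul_le_mul_of_nonneg_left key (Real.sqrt_nonneg _)
    _ = Real.sqrt 3 * Real.sqrt (x * (1 - x)) := mul_comm _ _

open MeasureTheory Filter Topology in
lemma sum_sqrt_le (n : ℕ) {z : ℝ} (hz : z ∈ Set.Icc (0:ℝ) 1) :
    ∑ b : Fin n → Bool, Real.sqrt (becZF n b z * (1 - becZF n b z))
      ≤ Real.sqrt 3 ^ n * Real.sqrt (z * (1 - z)) := by
  induction n generalizing z with
  | zero => rw [Fintype.sum_unique]; simp [becZF]
  | succ n ih =>
    rw [sum_split]
    simp only [becZF_cons]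
    rw [Fintype.sum_bool]
    have h1 := ih (becT_mem true hz)
    have h2 := ih (becT_mem false hz)
    have h3 := core_ineq hz
    have h4 : (0:ℝ) ≤ Real.sqrt 3 ^ n := pow_nonneg (Real.sqrt_nonneg 3) n
    calc (∑ b : Fin n → Bool, Real.sqrt (becZF n b (becT true z) * (1 - becZF n b (becT true z))))
          + ∑ b : Fin n → Bool, Real.sqrt (becZF n b (becT false z) * (1 - becZF n b (becT false z)))
        ≤ Real.sqrt 3 ^ n * Real.sqrt (becT true z * (1 - becT true z))
          + Real.sqrt 3 ^ n * Real.sqrt (becT false z * (1 - becT false z)) := add_le_add h1 h2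
      _ = Real.sqrt 3 ^ n * (Real.sqrt (becT false z * (1 - becT false z))
            + Real.sqrt (becT true z * (1 - becT true z))) := by ring
      _ ≤ Real.sqrt 3 ^ n * (Real.sqrt 3 * Real.sqrt (z * (1 - z))) :=
          mul_le_mul_of_nonneg_left h3 h4
      _ = Real.sqrt 3 ^ (n + 1) * Real.sqrt (z * (1 - z)) := by ring

open MeasureTheory Filter Topology in
lemma cyl_measurable (n : ℕ) (b : Fin n → Bool) :
    MeasurableSet {ω : ℕ → Bool | ∀ i : Fin n, ω i = b i} := by
  have : {ω : ℕ → Bool | ∀ i : Fin n, ω i = b i}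
      = ⋂ i : Fin n, (fun ω : ℕ → Bool => ω i) ⁻¹' {b i} := by
    ext ω; simp [Set.mem_iInter]
  rw [this]
  exact MeasurableSet.iInter fun i => (measurable_pi_apply _) (measurableSet_singleton _)

open MeasureTheory Filter Topology in
lemma lintegral_cyl {μ : Measure (ℕ → Bool)} (hμ : IsBernoulliHalf μ) (n : ℕ)
    (F : (Fin n → Bool) → ENNReal) :
    ∫⁻ ω, F (fun i : Fin n => ω i) ∂μ = (2 : ENNReal)⁻¹ ^ n * ∑ b : Fin n → Bool, F b := by
  have hpt : ∀ ω : ℕ → Bool, F (fun i : Fin n => ω i)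
      = ∑ b : Fin n → Bool,
          Set.indicator {ω' : ℕ → Bool | ∀ i : Fin n, ω' i = b i} (fun _ => F b) ω := by
    intro ω
    rw [Finset.sum_eq_single (fun i : Fin n => ω i)]
    · rw [Set.indicator_of_mem]
      exact fun i => rfl
    · intro b _ hb
      apply Set.indicator_of_notMem
      simp only [Set.mem_setOf_eq]
      intro h
      exact hb (funext fun i => (h i).symm)
    · intro h; exact absurd (Finset.mem_univ _) h
  rw [lintegral_congr hpt, lintegral_finset_sum]
  · have : ∀ b : Fin n → Bool,
        (∫⁻ ω, Set.indicator {ω' : ℕ → Bool | ∀ i : Fin n, ω' i = b i} (fun _ => F b) ω ∂μ)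
          = (2 : ENNReal)⁻¹ ^ n * F b := by
      intro b
      rw [lintegral_indicator_const (cyl_measurable n b), hμ n b, mul_comm]
    rw [Finset.sum_congr rfl fun b _ => this b, ← Finset.mul_sum]
  · intro b _
    exact Measurable.indicator measurable_const (cyl_measurable n b)

open MeasureTheory Filter Topology in
lemma measurable_becZ (z : ℝ) (n : ℕ) : Measurable fun ω : ℕ → Bool => becZ z n ω := by
  induction n with
  | zero => exact measurable_const
  | succ n ih =>
    have : (fun ω : ℕ → Bool => becZ z (n+1) ω)
        = fun ω => if ω n = true then (becZ z n ω) ^ 2 else 2 * becZ z n ω - (becZ z n ω) ^ 2 := by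
      funext ω
      show becT (ω n) (becZ z n ω) = _
      by_cases h : ω n = true <;> simp [becT, h]
    rw [this]
    have hms : MeasurableSet {ω : ℕ → Bool | ω n = true} := by
      have : {ω : ℕ → Bool | ω n = true} = (fun ω : ℕ → Bool => ω n) ⁻¹' {true} := by
        ext ω; simp
      rw [this]
      exact (measurable_pi_apply n) (measurableSet_singleton true)
    exact Measurable.ite hms
      (ih.pow_const 2) ((measurable_const.mul ih).sub (ih.pow_const 2))

open MeasureTheory Filter Topology in
lemma ptwise {z : ℝ} (hz : z ∈ Set.Icc (0:ℝ) 1) (ω : ℕ → Bool)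
    (h : Summable fun n => Real.sqrt (becZ z n ω * (1 - becZ z n ω))) :
    Tendsto (fun n => becZ z n ω) atTop (nhds 0) ∨
      Tendsto (fun n => becZ z n ω) atTop (nhds 1) := by
  have hmem : ∀ n, becZ z n ω ∈ Set.Icc (0:ℝ) 1 := fun n => becZ_mem hz n ω
  have hu0 : ∀ n, (0:ℝ) ≤ becZ z n ω * (1 - becZ z n ω) := by
    intro n; obtain ⟨a, b⟩ := hmem n; nlinarith
  have hdist : ∀ n, dist (becZ z n ω) (becZ z (n+1) ω) = becZ z n ω * (1 - becZ z n ω) := by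
    intro n
    obtain ⟨a, b⟩ := hmem n
    have : becZ z (n+1) ω = becT (ω n) (becZ z n ω) := rfl
    rw [dist_comm, Real.dist_eq, this]
    cases hb : ω n
    · simp only [becT, Bool.false_eq_true, if_false]
      rw [abs_of_nonneg (by nlinarith)]; ring
    · simp only [becT, if_true]
      rw [abs_of_nonpos (by nlinarith)]; ring
  have hsqle : ∀ n, Real.sqrt (becZ z n ω * (1 - becZ z n ω)) ≤ 1 / 2 := by
    intro n
    have h14 : becZ z n ω * (1 - becZ z n ω) ≤ 1 / 4 := by
      obtain ⟨a, b⟩ := hmem n; nlinarith [sq_nonneg (1 - 2 * becZ z n ω)]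
    calc Real.sqrt (becZ z n ω * (1 - becZ z n ω)) ≤ Real.sqrt (1/4) := Real.sqrt_le_sqrt h14
      _ = 1/2 := by
          rw [show (1/4 : ℝ) = (1/2)^2 by norm_num, Real.sqrt_sq (by norm_num)]
  have hsum2 : Summable fun n => dist (becZ z n ω) (becZ z (n+1) ω) := by
    apply Summable.of_nonneg_of_le (fun n => dist_nonneg)
      (fun n => ?_) (h.mul_left (1/2))
    rw [hdist n]
    nlinarith [Real.mul_self_sqrt (hu0 n), hsqle n, Real.sqrt_nonneg (becZ z n ω * (1 - becZ z n ω))]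
  obtain ⟨L, hL⟩ := cauchySeq_tendsto_of_complete (cauchySeq_of_summable_dist hsum2)
  have h1 : Tendsto (fun n => becZ z n ω * (1 - becZ z n ω)) atTop (nhds (L * (1 - L))) :=
    hL.mul (tendsto_const_nhds.sub hL)
  have h2 : Tendsto (fun n => becZ z n ω * (1 - becZ z n ω)) atTop (nhds 0) := by
    have hs0 : Tendsto (fun n => Real.sqrt (becZ z n ω * (1 - becZ z n ω))) atTop (nhds 0) :=
      h.tendsto_atTop_zero
    have : (fun n => becZ z n ω * (1 - becZ z n ω))
        = fun n => Real.sqrt (becZ z n ω * (1 - becZ z n ω))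
            * Real.sqrt (becZ z n ω * (1 - becZ z n ω)) :=
      funext fun n => (Real.mul_self_sqrt (hu0 n)).symm
    rw [this]
    simpa using hs0.mul hs0
  have hL0 : L * (1 - L) = 0 := tendsto_nhds_unique h1 h2
  rcases mul_eq_zero.1 hL0 with hc | hc
  · left; rwa [hc] at hL
  · right
    have : L = 1 := by linarith
    rwa [this] at hL

open MeasureTheory Filter Topology in
lemma key_ae {μ : Measure (ℕ → Bool)} [IsProbabilityMeasure μ] (hμ : IsBernoulliHalf μ)
    {z : ℝ} (hz : z ∈ Set.Icc (0:ℝ) 1) :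
    ∀ᵐ ω ∂μ, Tendsto (fun n => becZ z n ω) atTop (nhds 0) ∨
      Tendsto (fun n => becZ z n ω) atTop (nhds 1) := by
  have hfmeas : ∀ n : ℕ, Measurable (fun ω : ℕ → Bool =>
      ENNReal.ofReal (Real.sqrt (becZ z n ω * (1 - becZ z n ω)))) := by
    intro n
    exact ENNReal.measurable_ofReal.comp
      ((measurable_becZ z n).mul (measurable_const.sub (measurable_becZ z n))).sqrt
  have h2 : (2 : ENNReal)⁻¹ = ENNReal.ofReal (1/2) := by
    rw [one_div, ENNReal.ofReal_inv_of_pos (by norm_num : (0:ℝ) < 2)]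
    norm_num
  have hbd : ∀ n : ℕ, ∫⁻ ω, ENNReal.ofReal (Real.sqrt (becZ z n ω * (1 - becZ z n ω))) ∂μ
      ≤ ENNReal.ofReal (1/2) * ENNReal.ofReal (Real.sqrt 3 / 2) ^ n := by
    intro n
    have hre : (fun ω : ℕ → Bool => ENNReal.ofReal (Real.sqrt (becZ z n ω * (1 - becZ z n ω))))
        = fun ω => (fun b : Fin n → Bool =>
            ENNReal.ofReal (Real.sqrt (becZF n b z * (1 - becZF n b z)))) (fun i : Fin n => ω i) := by
      funext ω; rw [becZ_eq_becZF]
    rw [hre, lintegral_cyl hμ n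
      (fun b : Fin n → Bool => ENNReal.ofReal (Real.sqrt (becZF n b z * (1 - becZF n b z))))]
    have hsum : ∑ b : Fin n → Bool, ENNReal.ofReal (Real.sqrt (becZF n b z * (1 - becZF n b z)))
        = ENNReal.ofReal (∑ b : Fin n → Bool, Real.sqrt (becZF n b z * (1 - becZF n b z))) :=
      (ENNReal.ofReal_sum_of_nonneg (fun b _ => Real.sqrt_nonneg _)).symm
    rw [hsum]
    have hZle : Real.sqrt (z * (1 - z)) ≤ 1/2 := by
      have h14 : z * (1 - z) ≤ 1/4 := by
        obtain ⟨a, b⟩ := hz; nlinarith [sq_nonneg (1 - 2*z)]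
      calc Real.sqrt (z * (1 - z)) ≤ Real.sqrt (1/4) := Real.sqrt_le_sqrt h14
        _ = 1/2 := by rw [show (1/4 : ℝ) = (1/2)^2 by norm_num, Real.sqrt_sq (by norm_num)]
    have hle : (∑ b : Fin n → Bool, Real.sqrt (becZF n b z * (1 - becZF n b z)))
        ≤ Real.sqrt 3 ^ n * (1/2) :=
      (sum_sqrt_le n hz).trans
        (mul_le_mul_of_nonneg_left hZle (pow_nonneg (Real.sqrt_nonneg 3) n))
    calc (2 : ENNReal)⁻¹ ^ n
          * ENNReal.ofReal (∑ b : Fin n → Bool, Real.sqrt (becZF n b z * (1 - becZF n b z)))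
        ≤ (2 : ENNReal)⁻¹ ^ n * ENNReal.ofReal (Real.sqrt 3 ^ n * (1/2)) :=
          mul_le_mul_right (ENNReal.ofReal_le_ofReal hle) _
      _ = ENNReal.ofReal (1/2) * ENNReal.ofReal (Real.sqrt 3 / 2) ^ n := by
          rw [h2, ← ENNReal.ofReal_pow (by norm_num : (0:ℝ) ≤ 1/2),
            ← ENNReal.ofReal_pow (div_nonneg (Real.sqrt_nonneg 3) (by norm_num)),
            ← ENNReal.ofReal_mul (by positivity), ← ENNReal.ofReal_mul (by norm_num)]
          congr 1
          rw [div_pow, div_pow]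
          ring
  have hr1 : ENNReal.ofReal (Real.sqrt 3 / 2) < 1 := by
    rw [ENNReal.ofReal_lt_one, div_lt_one (by norm_num : (0:ℝ) < 2)]
    exact (Real.sqrt_lt' (by norm_num : (0:ℝ) < 2)).2 (by norm_num)
  have htsum : (∑' n : ℕ, ∫⁻ ω, ENNReal.ofReal (Real.sqrt (becZ z n ω * (1 - becZ z n ω))) ∂μ)
      ≠ ⊤ := by
    apply ne_of_lt
    calc (∑' n : ℕ, ∫⁻ ω, ENNReal.ofReal (Real.sqrt (becZ z n ω * (1 - becZ z n ω))) ∂μ)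
        ≤ ∑' n : ℕ, ENNReal.ofReal (1/2) * ENNReal.ofReal (Real.sqrt 3 / 2) ^ n :=
          ENNReal.tsum_le_tsum hbd
      _ = ENNReal.ofReal (1/2) * ∑' n : ℕ, ENNReal.ofReal (Real.sqrt 3 / 2) ^ n :=
          ENNReal.tsum_mul_left
      _ = ENNReal.ofReal (1/2) * (1 - ENNReal.ofReal (Real.sqrt 3 / 2))⁻¹ := by
          rw [ENNReal.tsum_geometric]
      _ < ⊤ := ENNReal.mul_lt_top ENNReal.ofReal_lt_top
          (ENNReal.inv_lt_top.2 (tsub_pos_iff_lt.2 hr1))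
  have hlint := lintegral_tsum (μ := μ) (fun n => (hfmeas n).aemeasurable)
  have hae : ∀ᵐ ω ∂μ,
      (∑' n : ℕ, ENNReal.ofReal (Real.sqrt (becZ z n ω * (1 - becZ z n ω)))) < ⊤ := by
    apply ae_lt_top (Measurable.ennreal_tsum hfmeas)
    rw [hlint]
    exact htsum
  filter_upwards [hae] with ω hω
  refine ptwise hz ω ?_
  have hsummable := ENNReal.summable_toReal hω.ne
  have heq : (fun n => (ENNReal.ofReal (Real.sqrt (becZ z n ω * (1 - becZ z n ω)))).toReal)
      = fun n => Real.sqrt (becZ z n ω * (1 - becZ z n ω)) :=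
    funext fun n => ENNReal.toReal_ofReal (Real.sqrt_nonneg _)
  rwa [heq] at hsummable

open MeasureTheory Filter Topology in
lemma key_meas {μ : Measure (ℕ → Bool)} [IsProbabilityMeasure μ] (hμ : IsBernoulliHalf μ)
    {z : ℝ} (hz : z ∈ Set.Icc (0:ℝ) 1) :
    μ {ω | Tendsto (fun n => becZ z n ω) atTop (nhds 1)} = ENNReal.ofReal z := by
  set T := {ω : ℕ → Bool | Tendsto (fun n => becZ z n ω) atTop (nhds 1)} with hTdef
  have hT : MeasurableSet T := measurableSet_tendsto (nhds 1) (fun n => measurable_becZ z n)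
  have hint : ∀ n : ℕ, ∫⁻ ω, ENNReal.ofReal (becZ z n ω) ∂μ = ENNReal.ofReal z := by
    intro n
    have hre : (fun ω : ℕ → Bool => ENNReal.ofReal (becZ z n ω))
        = fun ω => (fun b : Fin n → Bool => ENNReal.ofReal (becZF n b z)) (fun i : Fin n => ω i) := by
      funext ω; rw [becZ_eq_becZF]
    rw [hre, lintegral_cyl hμ n (fun b : Fin n → Bool => ENNReal.ofReal (becZF n b z)),
      ← ENNReal.ofReal_sum_of_nonneg (fun b _ => (becZF_mem n hz b).1), sum_becZF,
      ENNReal.ofReal_mul (by positivity), ENNReal.ofReal_pow (by norm_num : (0:ℝ) ≤ 2)]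
    rw [show ENNReal.ofReal (2:ℝ) = 2 by norm_num]
    rw [← mul_assoc, ← mul_pow, ENNReal.inv_mul_cancel (by norm_num) (by norm_num), one_pow,
      one_mul]
  have hconv : ∀ᵐ ω ∂μ, Tendsto (fun n => ENNReal.ofReal (becZ z n ω)) atTop
      (nhds (T.indicator (fun _ => (1 : ENNReal)) ω)) := by
    filter_upwards [key_ae hμ hz] with ω hω
    by_cases hωT : ω ∈ T
    · rw [Set.indicator_of_mem hωT]
      have h1 : Tendsto (fun n => becZ z n ω) atTop (nhds 1) := hωT
      have := (ENNReal.continuous_ofReal.tendsto 1).comp h1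
      simpa [Function.comp_def] using this
    · rw [Set.indicator_of_notMem hωT]
      rcases hω with h0 | h1
      · have := (ENNReal.continuous_ofReal.tendsto 0).comp h0
        simpa [Function.comp_def] using this
      · exact absurd h1 hωT
  have hmeas : ∀ n : ℕ, Measurable fun ω : ℕ → Bool => ENNReal.ofReal (becZ z n ω) :=
    fun n => ENNReal.measurable_ofReal.comp (measurable_becZ z n)
  have hboundle : ∀ n : ℕ, (fun ω : ℕ → Bool => ENNReal.ofReal (becZ z n ω))
      ≤ᵐ[μ] fun _ => (1 : ENNReal) := by
    intro n
    filter_upwards with ω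
    exact ENNReal.ofReal_le_one.2 (becZ_mem hz n ω).2
  have hfin : ∫⁻ _, (1 : ENNReal) ∂μ ≠ ⊤ := by simp
  have hDCT := tendsto_lintegral_of_dominated_convergence _ hmeas hboundle hfin hconv
  simp only [hint] at hDCT
  have hind : ∫⁻ ω, T.indicator (fun _ => (1 : ENNReal)) ω ∂μ = μ T := by
    rw [lintegral_indicator_const hT, one_mul]
  rw [hind] at hDCT
  exact tendsto_nhds_unique hDCT tendsto_const_nhds

lemma ZstarS_nonempty (ω : ℕ → Bool) :
    ({z ∈ Set.Icc (0:ℝ) 1 | Tendsto (fun n => becZ z n ω) atTop (nhds 1)} ∪ {1}).Nonempty :=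
  ⟨1, Or.inr rfl⟩

open MeasureTheory Filter Topology in
lemma ZstarS_bdd (ω : ℕ → Bool) :
    BddBelow ({z ∈ Set.Icc (0:ℝ) 1 | Tendsto (fun n => becZ z n ω) atTop (nhds 1)} ∪ {1}) := by
  refine ⟨0, fun x hx => ?_⟩
  rcases hx with hx | hx
  · exact hx.1.1
  · rw [Set.mem_singleton_iff] at hx
    rw [hx]; norm_num

open MeasureTheory Filter Topology in
lemma Zstar_mem (ω : ℕ → Bool) : Zstar ω ∈ Set.Icc (0:ℝ) 1 := by
  constructor
  · apply le_csInf (ZstarS_nonempty ω)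
    rintro x (hx | hx)
    · exact hx.1.1
    · rw [Set.mem_singleton_iff] at hx; rw [hx]; norm_num
  · exact csInf_le (ZstarS_bdd ω) (Or.inr rfl)

theorem stmt4 (μ : Measure (ℕ → Bool)) [IsProbabilityMeasure μ] (hμ : IsBernoulliHalf μ) :
    (∀ᵐ ω ∂μ, ∃ zs ∈ Set.Icc (0:ℝ) 1,
        (∀ z ∈ Set.Ico (0:ℝ) zs, Tendsto (fun n => becZ z n ω) atTop (nhds 0)) ∧
        (∀ z ∈ Set.Ioc zs (1:ℝ), Tendsto (fun n => becZ z n ω) atTop (nhds 1))) ∧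
    (∀ z ∈ Set.Icc (0:ℝ) 1, μ {ω | Zstar ω ≤ z} = ENNReal.ofReal z) := by
  constructor
  · have hQ : ∀ᵐ ω ∂μ, ∀ q : ℚ, ((q:ℝ) ∈ Set.Icc (0:ℝ) 1) →
        (Tendsto (fun n => becZ (q:ℝ) n ω) atTop (nhds 0) ∨
          Tendsto (fun n => becZ (q:ℝ) n ω) atTop (nhds 1)) := by
      rw [ae_all_iff]
      intro q
      by_cases hq : (q:ℝ) ∈ Set.Icc (0:ℝ) 1
      · filter_upwards [key_ae hμ hq] with ω h _
        exact h
      · filter_upwards with ω h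
        exact absurd h hq
    filter_upwards [hQ] with ω hω
    refine ⟨Zstar ω, Zstar_mem ω, ?_, ?_⟩
    · rintro z ⟨hz0, hz1⟩
      obtain ⟨q, hq1, hq2⟩ := exists_rat_btwn hz1
      have hq0 : (0:ℝ) ≤ q := le_of_lt (lt_of_le_of_lt hz0 hq1)
      have hqle1 : (q:ℝ) ≤ 1 := le_of_lt (lt_of_lt_of_le hq2 (Zstar_mem ω).2)
      have hnot : ¬ Tendsto (fun n => becZ (q:ℝ) n ω) atTop (nhds 1) := by
        intro hT
        have : Zstar ω ≤ q := csInf_le (ZstarS_bdd ω) (Or.inl ⟨⟨hq0, hqle1⟩, hT⟩)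
        linarith
      have h0 : Tendsto (fun n => becZ (q:ℝ) n ω) atTop (nhds 0) :=
        (hω q ⟨hq0, hqle1⟩).resolve_right hnot
      apply squeeze_zero (fun n => (becZ_mem ⟨hz0, hz1.le.trans (Zstar_mem ω).2⟩ n ω).1)
        (fun n => becZ_mono hz0 hq1.le hqle1 n ω) h0
    · rintro z ⟨hz1, hz2⟩
      obtain ⟨w, hwS, hwz⟩ := exists_lt_of_csInf_lt (ZstarS_nonempty ω) hz1
      rcases hwS with hwS | hwS
      · obtain ⟨⟨hw0, hw1⟩, hTw⟩ := hwS
        exact tendsto_of_tendsto_of_tendsto_of_le_of_le hTw tendsto_const_nhds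
          (fun n => becZ_mono hw0 hwz.le hz2 n ω)
          (fun n => (becZ_mem ⟨hw0.trans hwz.le, hz2⟩ n ω).2)
      · rw [Set.mem_singleton_iff] at hwS
        rw [hwS] at hwz
        linarith
  · rintro z ⟨hz0, hz1⟩
    have hlow : {ω : ℕ → Bool | Tendsto (fun n => becZ z n ω) atTop (nhds 1)}
        ⊆ {ω | Zstar ω ≤ z} :=
      fun ω h => csInf_le (ZstarS_bdd ω) (Or.inl ⟨⟨hz0, hz1⟩, h⟩)
    have hge : ENNReal.ofReal z ≤ μ {ω | Zstar ω ≤ z} := by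
      rw [← key_meas hμ ⟨hz0, hz1⟩]
      exact measure_mono hlow
    refine le_antisymm ?_ hge
    rcases eq_or_lt_of_le hz1 with h1 | h1
    · rw [h1]
      simpa using prob_le_one
    · have hgen : ∀ z' : ℝ, z < z' → z' ≤ 1 → μ {ω | Zstar ω ≤ z} ≤ ENNReal.ofReal z' := by
        intro z' hzz' hz'1
        have hz'0 : (0:ℝ) ≤ z' := le_of_lt (lt_of_le_of_lt hz0 hzz')
        have hsub : {ω : ℕ → Bool | Zstar ω ≤ z}
            ⊆ {ω : ℕ → Bool | Tendsto (fun n => becZ z' n ω) atTop (nhds 1)} := by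
          intro ω hωz
          have hlt : sInf ({x ∈ Set.Icc (0:ℝ) 1 |
              Tendsto (fun n => becZ x n ω) atTop (nhds 1)} ∪ {1}) < z' :=
            lt_of_le_of_lt hωz hzz'
          obtain ⟨w, hwS, hwz⟩ := exists_lt_of_csInf_lt (ZstarS_nonempty ω) hlt
          rcases hwS with hwS | hwS
          · obtain ⟨⟨hw0, hw1⟩, hTw⟩ := hwS
            exact tendsto_of_tendsto_of_tendsto_of_le_of_le hTw tendsto_const_nhds
              (fun n => becZ_mono hw0 hwz.le hz'1 n ω)
              (fun n => (becZ_mem ⟨hw0.trans hwz.le, hz'1⟩ n ω).2)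
          · rw [Set.mem_singleton_iff] at hwS
            rw [hwS] at hwz
            linarith
        calc μ {ω | Zstar ω ≤ z} ≤ μ _ := measure_mono hsub
          _ = ENNReal.ofReal z' := key_meas hμ ⟨hz'0, hz'1⟩
      have hk : ∀ k : ℕ, μ {ω | Zstar ω ≤ z} ≤ ENNReal.ofReal (z + (1 - z)/(k + 1)) := by
        intro k
        have hc0 : (0:ℝ) < (k:ℝ) + 1 := by positivity
        have hc1 : (1:ℝ) ≤ (k:ℝ) + 1 := by
          have := Nat.cast_nonneg (α := ℝ) k
          linarith
        refine hgen _ ?_ ?_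
        · have : (0:ℝ) < (1 - z)/(k + 1) := div_pos (by linarith) hc0
          linarith
        · have : (1 - z)/((k:ℝ) + 1) ≤ 1 - z := div_le_self (by linarith) hc1
          linarith
      have ht : Tendsto (fun k : ℕ => ENNReal.ofReal (z + (1 - z)/(k + 1))) atTop
          (nhds (ENNReal.ofReal z)) := by
        apply (ENNReal.continuous_ofReal.tendsto z).comp
        have : Tendsto (fun k : ℕ => z + (1 - z) * (1/(k + 1))) atTop (nhds (z + (1 - z) * 0)) :=
          tendsto_const_nhds.add (tendsto_const_nhds.mul tendsto_one_div_add_atTop_nhds_zero_nat)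
        simpa [div_eq_mul_inv] using this
      exact ge_of_tendsto' ht hk
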